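/- Suppose f = g ∘ ℬ, where ℬ : E₁ → E₃ is a continuous linear map into a finite-dimensional real inner product space E₃ and g : E₃ → ℝ is differentiable and α_g-strongly convex, R_Q is proper, lower semicontinuous and convex, and the augmented Lagrangian L_ρ (ρ > 0) has a saddle point. Then any two optimal solutions q₁* = (x₁*, y₁*) and q₂* = (x₂*, y₂*) of Problem (OP) satisfy ℬx₁* = ℬx₂*. -/

import Mathlib

open scoped RealInnerProductSpace
noncomputable section

variable {E₁ E₂ E₃ : Type*}
  [NormedAddCommGroup E₁] [InnerProductSpace ℝ E₁] [FiniteDimensional ℝ E₁]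
  [NormedAddCommGroup E₂] [InnerProductSpace ℝ E₂] [FiniteDimensional ℝ E₂]
  [NormedAddCommGroup E₃] [InnerProductSpace ℝ E₃] [FiniteDimensional ℝ E₃]

/-- first component of a point of `E := E₁ ×₂ E₂` -/
def xPart (q : WithLp 2 (E₁ × E₂)) : E₁ := (WithLp.equiv 2 (E₁ × E₂) q).1

/-- The constraint map `𝒦(x,y) := 𝒜x − y`, as a continuous linear map. -/
def Kmap (A : E₁ →L[ℝ] E₂) : WithLp 2 (E₁ × E₂) →L[ℝ] E₂ :=
  (A.comp (ContinuousLinearMap.fst ℝ E₁ E₂) - ContinuousLinearMap.snd ℝ E₁ E₂).comp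
    (WithLp.prodContinuousLinearEquiv 2 ℝ E₁ E₂).toContinuousLinearMap

/-- objective of Problem (OP): `h(q) := f(x) + R_Q(q)` -/
def hOP (f : E₁ → ℝ) (RQ : WithLp 2 (E₁ × E₂) → EReal) (q : WithLp 2 (E₁ × E₂)) : EReal :=
  (f (xPart q) : EReal) + RQ q

/-- the augmented Lagrangian `L_ρ(q,w) := h(q) + ⟨w,𝒦q⟩ + (ρ/2)‖𝒦q‖²` -/
def AL (f : E₁ → ℝ) (RQ : WithLp 2 (E₁ × E₂) → EReal) (A : E₁ →L[ℝ] E₂) (ρ : ℝ)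
    (q : WithLp 2 (E₁ × E₂)) (w : E₂) : EReal :=
  hOP f RQ q + ((⟪w, Kmap A q⟫ + ρ / 2 * ‖Kmap A q‖ ^ 2 : ℝ) : EReal)

/-- saddle point of the augmented Lagrangian -/
def IsSaddle (f : E₁ → ℝ) (RQ : WithLp 2 (E₁ × E₂) → EReal) (A : E₁ →L[ℝ] E₂) (ρ : ℝ)
    (qs : WithLp 2 (E₁ × E₂)) (ws : E₂) : Prop :=
  ∀ q : WithLp 2 (E₁ × E₂), ∀ w : E₂,
    AL f RQ A ρ qs w ≤ AL f RQ A ρ qs ws ∧ AL f RQ A ρ qs ws ≤ AL f RQ A ρ q ws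

/-- set of optimal solutions of Problem (OP) -/
def OptSet (f : E₁ → ℝ) (RQ : WithLp 2 (E₁ × E₂) → EReal) (A : E₁ →L[ℝ] E₂) :
    Set (WithLp 2 (E₁ × E₂)) :=
  {q | Kmap A q = 0 ∧ ∀ p, Kmap A p = 0 → hOP f RQ q ≤ hOP f RQ p}

/-- a proper function with values in `(-∞, +∞]` -/
def ProperFun {V : Type*} (R : V → EReal) : Prop :=
  (∃ x, R x ≠ ⊤) ∧ ∀ x, R x ≠ ⊥

/-- convexity for `EReal`-valued functions -/
def ERConvexOn {V : Type*} [AddCommGroup V] [Module ℝ V] (R : V → EReal) : Prop :=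
  ∀ x y : V, ∀ a b : ℝ, 0 ≤ a → 0 ≤ b → a + b = 1 →
    R (a • x + b • y) ≤ (a : EReal) * R x + (b : EReal) * R y

lemma ERealExistsCoe (a : EReal) (h1 : a ≠ ⊤) (h2 : a ≠ ⊥) : ∃ r : ℝ, a = r := by
  induction a using EReal.rec with
  | bot => exact absurd rfl h2
  | coe r => exact ⟨r, rfl⟩
  | top => exact absurd rfl h1

lemma midSC {F : Type*} [NormedAddCommGroup F] [InnerProductSpace ℝ F] [CompleteSpace F]
    (g : F → ℝ) (αg : ℝ)
    (hgsc : ∀ u v : F, g v ≥ g u + ⟪gradient g u, v - u⟫ + αg / 2 * ‖v - u‖ ^ 2)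
    (u v : F) :
    g ((2⁻¹:ℝ) • u + (2⁻¹:ℝ) • v) ≤ 2⁻¹ * g u + 2⁻¹ * g v - αg/8 * ‖u - v‖^2 := by
  set m := (2⁻¹:ℝ) • u + (2⁻¹:ℝ) • v with hm
  have h1 := hgsc m u
  have h2 := hgsc m v
  have e1 : u - m = (2⁻¹:ℝ) • (u - v) := by rw [hm]; module
  have e2 : v - m = -((2⁻¹:ℝ) • (u - v)) := by rw [hm]; module
  rw [e1] at h1
  rw [e2] at h2
  rw [inner_neg_right, norm_neg] at h2
  have hn : ‖(2⁻¹:ℝ) • (u - v)‖^2 = 4⁻¹ * ‖u - v‖^2 := by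
    rw [norm_smul]; simp; ring
  rw [hn] at h1 h2
  linarith

/-- if `f = g ∘ ℬ` with `g` differentiable and `α_g`-strongly convex,
`R_Q` proper lsc convex, and `L_ρ` (ρ > 0) has a saddle point, then any two optimal
solutions `q₁* = (x₁*,y₁*)`, `q₂* = (x₂*,y₂*)` of (OP) satisfy `ℬx₁* = ℬx₂*`. -/
theorem B_equal_on_optimal (g : E₃ → ℝ) (B : E₁ →L[ℝ] E₃) (f : E₁ → ℝ)
    (hf : f = fun x => g (B x))
    (αg : ℝ) (hαg : 0 < αg) (hgdiff : Differentiable ℝ g)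
    (hgsc : ∀ u v : E₃, g v ≥ g u + ⟪gradient g u, v - u⟫ + αg / 2 * ‖v - u‖ ^ 2)
    (RQ : WithLp 2 (E₁ × E₂) → EReal)
    (hRQproper : ProperFun RQ) (hRQlsc : LowerSemicontinuous RQ) (hRQconv : ERConvexOn RQ)
    (A : E₁ →L[ℝ] E₂) (ρ : ℝ) (hρ : 0 < ρ)
    (hsaddle : ∃ qs ws, IsSaddle f RQ A ρ qs ws)
    (q₁ q₂ : WithLp 2 (E₁ × E₂))
    (hq₁ : q₁ ∈ OptSet f RQ A) (hq₂ : q₂ ∈ OptSet f RQ A) :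
    B (xPart q₁) = B (xPart q₂) := by
  obtain ⟨qs, ws, hs⟩ := hsaddle
  obtain ⟨x₀, hx₀top⟩ := hRQproper.1
  have hbot := hRQproper.2
  obtain ⟨r₀, hr₀⟩ := ERealExistsCoe _ hx₀top (hbot x₀)
  have hALx0 : AL f RQ A ρ x₀ ws ≠ ⊤ := by
    simp only [AL, hOP, hr₀]
    rw [← EReal.coe_add, ← EReal.coe_add]
    exact EReal.coe_ne_top _
  have hALqs_ne_top : AL f RQ A ρ qs ws ≠ ⊤ :=
    fun h => hALx0 (top_le_iff.mp (h ▸ (hs x₀ ws).2))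
  have hqs_top : RQ qs ≠ ⊤ := by
    intro h
    apply hALqs_ne_top
    simp only [AL, hOP, h, EReal.coe_add_top, EReal.top_add_coe]
  obtain ⟨rs, hrs⟩ := ERealExistsCoe _ hqs_top (hbot qs)
  have hALqs : ∀ w, AL f RQ A ρ qs w =
      ((f (xPart qs) + rs + (⟪w, Kmap A qs⟫ + ρ/2 * ‖Kmap A qs‖^2) : ℝ) : EReal) := by
    intro w
    simp only [AL, hOP, hrs]
    norm_cast
  have hKqs : Kmap A qs = 0 := by
    have h1 := (hs qs (ws + Kmap A qs)).1
    rw [hALqs, hALqs, EReal.coe_le_coe_iff] at h1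
    rw [inner_add_left, real_inner_self_eq_norm_sq] at h1
    have hz : ‖Kmap A qs‖ = 0 := by nlinarith [norm_nonneg (Kmap A qs)]
    exact norm_eq_zero.mp hz
  -- optimal values are finite
  have hle1 := hq₁.2 qs hKqs
  have hle2 := hq₂.2 qs hKqs
  have hq1top : RQ q₁ ≠ ⊤ := by
    intro h
    rw [hOP, h, EReal.coe_add_top, hOP, hrs, top_le_iff, ← EReal.coe_add] at hle1
    exact EReal.coe_ne_top _ hle1
  have hq2top : RQ q₂ ≠ ⊤ := by
    intro h
    rw [hOP, h, EReal.coe_add_top, hOP, hrs, top_le_iff, ← EReal.coe_add] at hle2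
    exact EReal.coe_ne_top _ hle2
  obtain ⟨r₁, hr₁⟩ := ERealExistsCoe _ hq1top (hbot q₁)
  obtain ⟨r₂, hr₂⟩ := ERealExistsCoe _ hq2top (hbot q₂)
  -- midpoint is feasible
  set m := (2⁻¹:ℝ) • q₁ + (2⁻¹:ℝ) • q₂ with hmdef
  have hKm : Kmap A m = 0 := by
    simp [hmdef, map_add, map_smul, hq₁.1, hq₂.1]
  have hconv := hRQconv q₁ q₂ 2⁻¹ 2⁻¹ (by norm_num) (by norm_num) (by norm_num)
  rw [hr₁, hr₂, ← EReal.coe_mul, ← EReal.coe_mul, ← EReal.coe_add] at hconv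
  have hmtop : RQ m ≠ ⊤ := by
    intro h
    rw [hmdef] at h
    rw [h, top_le_iff] at hconv
    exact EReal.coe_ne_top _ hconv
  obtain ⟨rm, hrm⟩ := ERealExistsCoe _ hmtop (hbot m)
  rw [← hmdef, hrm, EReal.coe_le_coe_iff] at hconv
  -- optimality against midpoint and against each other
  have hlem := hq₁.2 m hKm
  rw [hOP, hOP, hr₁, hrm, ← EReal.coe_add, ← EReal.coe_add, EReal.coe_le_coe_iff] at hlem
  have h21 := hq₂.2 q₁ hq₁.1
  rw [hOP, hOP, hr₁, hr₂, ← EReal.coe_add, ← EReal.coe_add, EReal.coe_le_coe_iff] at h21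
  -- xPart of midpoint
  have hx : xPart m = (2⁻¹:ℝ) • xPart q₁ + (2⁻¹:ℝ) • xPart q₂ := by
    rw [hmdef]
    simp [xPart, WithLp.ofLp_add, WithLp.ofLp_smul]
  have hfm : f (xPart m) = g ((2⁻¹:ℝ) • B (xPart q₁) + (2⁻¹:ℝ) • B (xPart q₂)) := by
    rw [hf, hx]
    simp [map_add, map_smul]
  have hsc := midSC g αg hgsc (B (xPart q₁)) (B (xPart q₂))
  rw [← hfm] at hsc
  have hf1 : f (xPart q₁) = g (B (xPart q₁)) := by rw [hf]
  have hf2 : f (xPart q₂) = g (B (xPart q₂)) := by rw [hf]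
  have hd2 : ‖B (xPart q₁) - B (xPart q₂)‖^2 ≤ 0 := by
    nlinarith [hlem, h21, hconv, hsc, hf1, hf2, hαg]
  have : ‖B (xPart q₁) - B (xPart q₂)‖ = 0 := by
    nlinarith [norm_nonneg (B (xPart q₁) - B (xPart q₂)), sq_nonneg ‖B (xPart q₁) - B (xPart q₂)‖]
  exact sub_eq_zero.mp (norm_eq_zero.mp this)

end
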